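/- Let P = {p_k : k ≥ 1} be a probability distribution on a countable alphabet. Then the effective cardinality K = #{k : p_k > 0} is finite if and only if there exist a constant q_0 ∈ (0,1) and a constant C > 0 such that t_n ≤ C · n · q_0^n for all n; in particular, when K is finite, t_n → 0 exponentially fast. -/

import Mathlib

open Filter Topology

/-- The tail index `t_n = n * ∑_k p_k (1 - p_k)^n`. -/
noncomputable def tailIndex (p : ℕ → ℝ) (n : ℕ) : ℝ :=
  (n : ℝ) * ∑' k, p k * (1 - p k) ^ n

/-- The effective cardinality `K = #{k : p_k > 0}` is finite if and only if
`t_n ≤ C · n · q₀ⁿ` for all `n ≥ 1`, for some constants `q₀ ∈ (0,1)` and `C > 0`;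
in particular `t_n → 0` exponentially fast when `K` is finite. -/
theorem stmt3 (p : ℕ → ℝ) (hp : ∀ k, 0 ≤ p k) (hsum : ∑' k, p k = 1) :
    {k | 0 < p k}.Finite ↔
      ∃ q₀ C : ℝ, q₀ ∈ Set.Ioo (0 : ℝ) 1 ∧ 0 < C ∧
        ∀ n : ℕ, 1 ≤ n → tailIndex p n ≤ C * n * q₀ ^ n := by
  have hsummable : Summable p := by
    by_contra h
    rw [tsum_eq_zero_of_not_summable h] at hsum
    norm_num at hsum
  have hple1 : ∀ k, p k ≤ 1 := by
    intro k
    calc p k ≤ ∑' j, p j := Summable.le_tsum hsummable k (fun j _ => hp j)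
    _ = 1 := hsum
  have hterm_nonneg : ∀ n k, 0 ≤ p k * (1 - p k) ^ n := fun n k =>
    mul_nonneg (hp k) (pow_nonneg (by linarith [hple1 k]) n)
  have hsummable_g : ∀ n : ℕ, Summable (fun k => p k * (1 - p k) ^ n) := by
    intro n
    refine Summable.of_nonneg_of_le (hterm_nonneg n) (fun k => ?_) hsummable
    have h1 : (1 - p k) ^ n ≤ 1 := by
      apply pow_le_one₀ (by linarith [hple1 k]) (by linarith [hp k])
    nlinarith [hp k]
  constructor
  · intro hfin
    have hne : hfin.toFinset.Nonempty := by
      rw [Set.Finite.toFinset_nonempty]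
      by_contra h
      rw [Set.not_nonempty_iff_eq_empty] at h
      have hz : ∀ j, p j = 0 := by
        intro j
        rcases eq_or_lt_of_le (hp j) with h' | h'
        · exact h'.symm
        · exact absurd h' (Set.eq_empty_iff_forall_notMem.mp h j)
      have : (∑' j, p j) = 0 := by simp [hz]
      linarith
    set m := hfin.toFinset.inf' hne p with hm
    have hm_pos : 0 < m := by
      rw [hm]
      refine (Finset.lt_inf'_iff hne).mpr fun k hk => ?_
      exact (hfin.mem_toFinset.mp hk)
    have hm_le : ∀ k, 0 < p k → m ≤ p k := by
      intro k hk
      exact Finset.inf'_le p (hfin.mem_toFinset.mpr hk)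
    have hm1 : m ≤ 1 := by
      obtain ⟨k, hk⟩ := hne
      exact le_trans (Finset.inf'_le p hk) (hple1 k)
    refine ⟨1 - m / 2, 1, ⟨by linarith, by linarith⟩, one_pos, ?_⟩
    intro n hn
    have key : ∑' k, p k * (1 - p k) ^ n ≤ (1 - m / 2) ^ n := by
      have h1 : ∑' k, p k * (1 - p k) ^ n ≤ ∑' k, p k * (1 - m / 2) ^ n := by
        refine Summable.tsum_le_tsum (fun k => ?_) (hsummable_g n)
          (by simpa using hsummable.mul_right ((1 - m / 2) ^ n))
        rcases eq_or_lt_of_le (hp k) with h | h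
        · simp [← h]
        · have hmk := hm_le k h
          have : (1 - p k) ^ n ≤ (1 - m / 2) ^ n := by
            apply pow_le_pow_left₀ (by linarith [hple1 k]) (by linarith) n
          nlinarith [hp k]
      rw [tsum_mul_right, hsum, one_mul] at h1
      exact h1
    unfold tailIndex
    have hn0 : (0:ℝ) ≤ n := Nat.cast_nonneg n
    calc (n : ℝ) * ∑' k, p k * (1 - p k) ^ n ≤ (n : ℝ) * (1 - m / 2) ^ n :=
          mul_le_mul_of_nonneg_left key hn0
      _ = 1 * n * (1 - m / 2) ^ n := by ring
  · rintro ⟨q₀, C, ⟨hq0, hq1⟩, hC, hbound⟩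
    by_contra hinf
    replace hinf : {k | 0 < p k}.Infinite := hinf
    have htend : Tendsto p atTop (𝓝 0) := hsummable.tendsto_atTop_zero
    have hev : ∀ᶠ k in atTop, p k < 1 - q₀ :=
      htend.eventually (gt_mem_nhds (by linarith))
    obtain ⟨N, hN⟩ := eventually_atTop.mp hev
    obtain ⟨k, hkS, hkN⟩ := hinf.exists_gt N
    have hpk : 0 < p k := hkS
    have hpk' : p k < 1 - q₀ := hN k (le_of_lt hkN)
    set q := 1 - p k with hq
    have hqq0 : q₀ < q := by rw [hq]; linarith
    have hratio : 1 < q / q₀ := (one_lt_div hq0).mpr hqq0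
    have htop : Tendsto (fun n : ℕ => (q / q₀) ^ n) atTop atTop :=
      tendsto_pow_atTop_atTop_of_one_lt hratio
    obtain ⟨n, hn1, hnbig⟩ :=
      ((htop.eventually_gt_atTop (C / p k)).and (eventually_ge_atTop 1)).exists
    have hlow : p k * q ^ n ≤ ∑' j, p j * (1 - p j) ^ n :=
      Summable.le_tsum (hsummable_g n) k (fun j _ => hterm_nonneg n j)
    have hub := hbound n hnbig
    unfold tailIndex at hub
    have hnpos : (0:ℝ) < n := by exact_mod_cast hnbig
    have h2 : (n : ℝ) * (p k * q ^ n) ≤ C * n * q₀ ^ n :=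
      le_trans (mul_le_mul_of_nonneg_left hlow (le_of_lt hnpos)) hub
    have h3 : p k * q ^ n ≤ C * q₀ ^ n := by
      have := (mul_le_mul_iff_right₀ hnpos).mp (by linarith [h2] : (n:ℝ) * (p k * q ^ n) ≤ (n:ℝ) * (C * q₀ ^ n))
      exact this
    have h4 : p k * (q / q₀) ^ n ≤ C := by
      rw [div_pow, ← mul_div_assoc, div_le_iff₀ (pow_pos hq0 n)]
      exact h3
    have h5 : C / p k < (q / q₀) ^ n := hn1
    rw [div_lt_iff₀ hpk] at h5
    nlinarith
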